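/- Let β ∈ [0,1] be such that G_k(β) < 0, i.e., the supremum of g_k(β,δ) over δ ∈ [0,β/2] is negative. Then α_k ≥ β. Consequently α_k ≥ sup { β ∈ [0,1] : G_k(β) < 0 }. -/

import Mathlib

open Filter

/-- Costs for the Levenshtein distance (as in the former Mathlib
`Mathlib/Data/List/EditDistance/Defs.lean`, removed since). -/
structure Levenshtein.Cost (α β δ : Type*) where
  /-- Cost to delete an element from a list. -/
  delete : α → δ
  /-- Cost to insert an element into a list. -/
  insert : β → δ
  /-- Cost to substitute one element for another in a list. -/
  substitute : α → β → δ

/-- The default cost structure, for which all operations cost `1` (and a match costs `0`). -/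
def Levenshtein.defaultCost {α : Type*} [DecidableEq α] : Levenshtein.Cost α α ℕ where
  delete _ := 1
  insert _ := 1
  substitute a b := if a = b then 0 else 1

/-- (Internal) dynamic programming step, as in the former Mathlib. -/
def Levenshtein.impl {α β δ : Type*} [AddZeroClass δ] [Min δ]
    (C : Levenshtein.Cost α β δ) (xs : List α) (y : β) (d : {r : List δ // 0 < r.length}) :
    {r : List δ // 0 < r.length} :=
  let ⟨ds, w⟩ := d
  xs.zip (ds.zip ds.tail) |>.foldr
    (init := ⟨[ds.getLast (List.length_pos_iff.mp w) + C.insert y], by simp⟩)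
    (fun ⟨x, d₀, d₁⟩ ⟨r, w⟩ =>
      ⟨min (C.delete x + r[0]) (min (C.insert y + d₀) (C.substitute x y + d₁)) :: r, by simp⟩)

/-- The Levenshtein distances from all suffixes of `xs` to `ys`, as in the former Mathlib. -/
def suffixLevenshtein {α β δ : Type*} [AddZeroClass δ] [Min δ]
    (C : Levenshtein.Cost α β δ) (xs : List α) (ys : List β) : {r : List δ // 0 < r.length} :=
  ys.foldr
    (Levenshtein.impl C xs)
    (xs.foldr (init := ⟨[0], by simp⟩) (fun a ⟨ds, w⟩ => ⟨(C.delete a + ds[0]) :: ds, by simp⟩))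

/-- The Levenshtein distance between two lists, as in the former Mathlib. -/
def levenshtein {α β δ : Type*} [AddZeroClass δ] [Min δ]
    (C : Levenshtein.Cost α β δ) (xs : List α) (ys : List β) : δ :=
  let ⟨r, w⟩ := suffixLevenshtein C xs ys
  r[0]

/-- Edit distance between two strings over `Fin k`, with unit costs for
substitution, deletion and insertion, and cost `0` for a match. -/
def editDist {k : ℕ} (x y : List (Fin k)) : ℕ :=
  levenshtein Levenshtein.defaultCost x y

/-- `e_k(n)`: the average edit distance between two independent uniformly
random strings of length `n` over an alphabet of size `k`. -/
noncomputable def avgEditDist (k n : ℕ) : ℝ :=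
  ((k : ℝ) ^ (2 * n))⁻¹ *
    ∑ x : Fin n → Fin k, ∑ y : Fin n → Fin k,
      (editDist (List.ofFn x) (List.ofFn y) : ℝ)

/-- `α_k(n) = e_k(n)/n`. -/
noncomputable def alphaN (k n : ℕ) : ℝ := avgEditDist k n / n

/-- The binary entropy function `H(t) = -t·log₂ t - (1-t)·log₂(1-t)`. -/
noncomputable def binEntropy (t : ℝ) : ℝ :=
  -(t * Real.logb 2 t) - (1 - t) * Real.logb 2 (1 - t)

/-- The exponent function `g_k(β,δ)`. -/
noncomputable def gExp (k : ℕ) (β δ : ℝ) : ℝ :=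
  (β - 2 * δ) * Real.logb 2 ((k : ℝ) - 1) - (1 - δ) * Real.logb 2 (k : ℝ) +
    2 * binEntropy δ + (1 - δ) * binEntropy ((β - 2 * δ) / (1 - δ))

/-- `G_k(β) = sup { g_k(β,δ) : 0 ≤ δ ≤ β/2 }`. -/
noncomputable def GExp (k : ℕ) (β : ℝ) : ℝ :=
  sSup (gExp k β '' Set.Icc 0 (β / 2))

namespace Levenshtein

@[simp]
theorem defaultCost_delete {α : Type*} [DecidableEq α] (a : α) :
    (defaultCost : Cost α α ℕ).delete a = 1 := rfl

@[simp]
theorem defaultCost_insert {α : Type*} [DecidableEq α] (a : α) :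
    (defaultCost : Cost α α ℕ).insert a = 1 := rfl

@[simp]
theorem defaultCost_substitute {α : Type*} [DecidableEq α] (a b : α) :
    (defaultCost : Cost α α ℕ).substitute a b = if a = b then 0 else 1 := rfl

end Levenshtein

theorem lev_def {α β δ : Type*} [AddZeroClass δ] [Min δ]
    (C : Levenshtein.Cost α β δ) (xs : List α) (ys : List β) :
    levenshtein C xs ys = (suffixLevenshtein C xs ys).1[0]'(suffixLevenshtein C xs ys).2 := rfl

theorem suffixLev_cons₂ {α β δ : Type*} [AddZeroClass δ] [Min δ]
    (C : Levenshtein.Cost α β δ) (xs : List α) (y : β) (ys : List β) :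
    suffixLevenshtein C xs (y :: ys) = Levenshtein.impl C xs y (suffixLevenshtein C xs ys) := rfl

theorem suffixLev_cons_tail {α β δ : Type*} [AddZeroClass δ] [Min δ]
    (C : Levenshtein.Cost α β δ) (x : α) (xs : List α) (ys : List β) :
    (suffixLevenshtein C (x :: xs) ys).1.tail = (suffixLevenshtein C xs ys).1 := by
  induction ys with
  | nil => rfl
  | cons y ys ih =>
    rw [suffixLev_cons₂, suffixLev_cons₂]
    generalize suffixLevenshtein C (x :: xs) ys = d at ih ⊢
    generalize suffixLevenshtein C xs ys = s at ih ⊢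
    obtain ⟨d, hd⟩ := d
    obtain ⟨s, hs⟩ := s
    simp only at ih
    subst ih
    rcases d with _ | ⟨d0, _ | ⟨d1, ds⟩⟩
    · simp at hd
    · simp at hs
    · rfl

theorem impl_cons_head {α β δ : Type*} [AddZeroClass δ] [Min δ]
    (C : Levenshtein.Cost α β δ) (x : α) (xs : List α) (y : β)
    (d s : {r : List δ // 0 < r.length}) (h : d.1.tail = s.1) :
    (Levenshtein.impl C (x :: xs) y d).1[0]'(Levenshtein.impl C (x :: xs) y d).2 =
      min (C.delete x + (Levenshtein.impl C xs y s).1[0]'(Levenshtein.impl C xs y s).2)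
        (min (C.insert y + d.1[0]'d.2) (C.substitute x y + s.1[0]'s.2)) := by
  obtain ⟨d, hd⟩ := d
  obtain ⟨s, hs⟩ := s
  simp only at h
  subst h
  rcases d with _ | ⟨d0, _ | ⟨d1, ds⟩⟩
  · simp at hd
  · simp at hs
  · rfl

theorem levenshtein_cons_cons {α β δ : Type*} [AddZeroClass δ] [Min δ]
    (C : Levenshtein.Cost α β δ) (x : α) (xs : List α) (y : β) (ys : List β) :
    levenshtein C (x :: xs) (y :: ys) =
      min (C.delete x + levenshtein C xs (y :: ys))
        (min (C.insert y + levenshtein C (x :: xs) ys)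
          (C.substitute x y + levenshtein C xs ys)) := by
  simp only [lev_def, suffixLev_cons₂]
  exact impl_cons_head C x xs y _ _ (suffixLev_cons_tail C x xs ys)

theorem impl_nil {α β δ : Type*} [AddZeroClass δ] [Min δ]
    (C : Levenshtein.Cost α β δ) (y : β) (d : {r : List δ // 0 < r.length}) (v : δ)
    (h : d.1 = [v]) : (Levenshtein.impl C [] y d).1 = [v + C.insert y] := by
  obtain ⟨d, hd⟩ := d
  simp only at h
  subst h
  rfl

@[simp]
theorem levenshtein_nil_nil {α β δ : Type*} [AddZeroClass δ] [Min δ]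
    (C : Levenshtein.Cost α β δ) : levenshtein C ([] : List α) ([] : List β) = 0 := rfl

@[simp]
theorem levenshtein_cons_nil {α β δ : Type*} [AddZeroClass δ] [Min δ]
    (C : Levenshtein.Cost α β δ) (x : α) (xs : List α) :
    levenshtein C (x :: xs) ([] : List β) = C.delete x + levenshtein C xs [] := rfl

theorem suffixLev_nil_left {α β δ : Type*} [AddZeroClass δ] [Min δ]
    (C : Levenshtein.Cost α β δ) (ys : List β) :
    (suffixLevenshtein C ([] : List α) ys).1 = [levenshtein C [] ys] := by
  induction ys with
  | nil => rfl
  | cons y ys ih =>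
    rw [suffixLev_cons₂, impl_nil C y _ _ ih, lev_def C [] (y :: ys)]
    simp only [suffixLev_cons₂, impl_nil C y _ _ ih, List.getElem_cons_zero]

@[simp]
theorem levenshtein_nil_cons {α β δ : Type*} [AddZeroClass δ] [Min δ]
    (C : Levenshtein.Cost α β δ) (y : β) (ys : List β) :
    levenshtein C ([] : List α) (y :: ys) = levenshtein C [] ys + C.insert y := by
  rw [lev_def C [] (y :: ys)]
  simp only [suffixLev_cons₂, impl_nil C y _ _ (suffixLev_nil_left C ys), List.getElem_cons_zero]

namespace EditProof

open scoped Classical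

/-- Canonical alignments: `Al q D I S x y` means there is an alignment of `x` with `y`
using `D` deletions, `I` insertions, `S` (proper) substitutions, never doing an
insertion immediately after a deletion; if `q = false` the first operation is not
an insertion. -/
inductive Al {k : ℕ} : Bool → ℕ → ℕ → ℕ → List (Fin k) → List (Fin k) → Prop
  | nil {q} : Al q 0 0 0 [] []
  | mtch {q D I S x y} (a : Fin k) : Al true D I S x y → Al q D I S (a::x) (a::y)
  | sub {q D I S x y} {a b : Fin k} (h : a ≠ b) : Al true D I S x y →
      Al q D I (S+1) (a::x) (b::y)
  | del {q D I S x y} (a : Fin k) : Al false D I S x y → Al q (D+1) I S (a::x) y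
  | ins {D I S x y} (b : Fin k) : Al true D I S x y → Al true D (I+1) S x (b::y)

theorem Al.lengths {k : ℕ} {q D I S} {x y : List (Fin k)} (h : Al q D I S x y) :
    x.length + I = y.length + D ∧ D + S ≤ x.length ∧ I + S ≤ y.length := by
  induction h with
  | nil => simp
  | mtch a h ih => simp only [List.length_cons]; omega
  | sub h h' ih => simp only [List.length_cons]; omega
  | del a h ih => simp only [List.length_cons]; omega
  | ins b h ih => simp only [List.length_cons]; omega

theorem Al.pushDel {k : ℕ} {q D I S} {x y : List (Fin k)} (a : Fin k)
    (h : Al q D I S x y) : Al true (D+1) I S (a::x) y := by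
  induction h with
  | nil => exact Al.del a Al.nil
  | mtch c h ih => exact Al.del a (Al.mtch c h)
  | sub hne h ih => exact Al.del a (Al.sub hne h)
  | del c h ih => exact Al.del a (Al.del c h)
  | ins b h ih => exact Al.ins b ih

theorem lev_nil_right {k : ℕ} (x : List (Fin k)) :
    levenshtein Levenshtein.defaultCost x [] = x.length := by
  induction x with
  | nil => simp
  | cons a x ih => simp [ih, Levenshtein.defaultCost_delete]; omega

theorem lev_nil_left {k : ℕ} (y : List (Fin k)) :
    levenshtein Levenshtein.defaultCost [] y = y.length := by
  induction y with
  | nil => simp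
  | cons b y ih => simp [ih, Levenshtein.defaultCost_insert]

theorem al_ins_all {k : ℕ} (y : List (Fin k)) : Al true 0 y.length 0 [] y := by
  induction y with
  | nil => exact Al.nil
  | cons b y ih => exact Al.ins b ih

theorem al_del_all {k : ℕ} {q : Bool} (x : List (Fin k)) : Al q x.length 0 0 x [] := by
  induction x generalizing q with
  | nil => exact Al.nil
  | cons a x ih => exact Al.del a ih

/-- Every pair of strings admits a canonical alignment of total cost at most the
levenshtein distance. -/
theorem exists_al {k : ℕ} (x y : List (Fin k)) :
    ∃ D I S, D + I + S ≤ levenshtein Levenshtein.defaultCost x y ∧ Al true D I S x y := by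
  induction x generalizing y with
  | nil =>
    exact ⟨0, y.length, 0, by simp [lev_nil_left], al_ins_all y⟩
  | cons a x ihx =>
    induction y with
    | nil =>
      exact ⟨(a::x).length, 0, 0, by simp [lev_nil_right], al_del_all _⟩
    | cons b y ihy =>
      rw [levenshtein_cons_cons]
      rcases Nat.le_total (Levenshtein.defaultCost.delete a +
          levenshtein Levenshtein.defaultCost x (b :: y))
          (min (Levenshtein.defaultCost.insert b +
              levenshtein Levenshtein.defaultCost (a :: x) y)
            (Levenshtein.defaultCost.substitute a b +
              levenshtein Levenshtein.defaultCost x y)) with hmin | hmin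
      · rw [min_eq_left hmin]
        obtain ⟨D, I, S, hc, hal⟩ := ihx (b :: y)
        exact ⟨D+1, I, S, by simp only [Levenshtein.defaultCost_delete]; omega, hal.pushDel a⟩
      · rw [min_eq_right hmin]
        rcases Nat.le_total (Levenshtein.defaultCost.insert b +
            levenshtein Levenshtein.defaultCost (a :: x) y)
            (Levenshtein.defaultCost.substitute a b +
              levenshtein Levenshtein.defaultCost x y) with hm2 | hm2
        · rw [min_eq_left hm2]
          obtain ⟨D, I, S, hc, hal⟩ := ihy
          exact ⟨D, I+1, S, by simp only [Levenshtein.defaultCost_insert]; omega, Al.ins b hal⟩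
        · rw [min_eq_right hm2]
          obtain ⟨D, I, S, hc, hal⟩ := ihx y
          by_cases hab : a = b
          · subst hab
            exact ⟨D, I, S, by simp only [Levenshtein.defaultCost_substitute, if_pos rfl]; omega, Al.mtch a hal⟩
          · exact ⟨D, I, S+1, by simp only [Levenshtein.defaultCost_substitute, if_neg hab]; omega,
              Al.sub hab hal⟩

open scoped Classical in
/-- All lists of length `n` over `Fin k`, as a `Finset`. -/
def allLists (k : ℕ) : ℕ → Finset (List (Fin k))
  | 0 => {[]}
  | n+1 => (Finset.univ ×ˢ allLists k n).image fun p => p.1 :: p.2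

theorem mem_allLists {k n : ℕ} {l : List (Fin k)} : l ∈ allLists k n ↔ l.length = n := by
  induction n generalizing l with
  | zero => cases l <;> simp [allLists]
  | succ n ih =>
    cases l with
    | nil => simp [allLists]
    | cons a l => simp [allLists, ih]

theorem card_allLists {k n : ℕ} : (allLists k n).card = k ^ n := by
  induction n with
  | zero => simp [allLists]
  | succ n ih =>
    rw [allLists, Finset.card_image_of_injective, Finset.card_product, Finset.card_univ,
      Fintype.card_fin, ih, pow_succ]
    · ring
    · intro p q h
      simp only [List.cons.injEq] at h
      exact Prod.ext h.1 h.2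

open scoped Classical in
/-- The number of pairs `(x, y)` of strings of lengths `n`, `L` admitting a canonical
alignment with counts `(D, I, S)`. -/
noncomputable def countAl (k : ℕ) (q : Bool) (n L D I S : ℕ) : ℕ :=
  ((allLists k n ×ˢ allLists k L).filter fun p => Al q D I S p.1 p.2).card

theorem key_binom (n' D S : ℕ) (hDS : D + S ≤ n' + 1) :
    n'.choose D * (n' - D).choose S
      + (if S = 0 then 0 else n'.choose D * (n' - D).choose (S - 1))
      + (if D = 0 then 0 else n'.choose (D - 1) * (n' + 1 - D).choose S)
      ≤ (n' + 1).choose D * (n' + 1 - D).choose S := by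
  rcases D with _ | D' <;> rcases S with _ | S'
  · simp
  · rw [if_neg (Nat.succ_ne_zero S'), if_pos rfl]
    simp only [Nat.sub_zero, Nat.add_sub_cancel, Nat.choose_zero_right, one_mul, add_zero]
    rw [Nat.choose_succ_succ n' S']
    simp only [Nat.succ_eq_add_one]
    omega
  · rw [if_pos rfl, if_neg (Nat.succ_ne_zero D')]
    simp only [Nat.choose_zero_right, mul_one, Nat.add_sub_cancel, zero_add]
    rw [Nat.choose_succ_succ n' D']
    simp only [Nat.succ_eq_add_one]
    omega
  · rw [if_neg (Nat.succ_ne_zero S'), if_neg (Nat.succ_ne_zero D')]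
    simp only [Nat.add_sub_cancel]
    rw [show n' + 1 - (D' + 1) = n' - (D' + 1) + 1 from by omega,
      Nat.choose_succ_succ (n' - (D' + 1)) S', Nat.choose_succ_succ n' D']
    exact le_of_eq (by ring)

theorem bnd_step (k n' L D I S : ℕ) (q : Bool) (hlen : n' + 1 + I = L + D)
    (hDS : D + S ≤ n' + 1) :
    k * (k^n' * k^I * (k-1)^S * (n'.choose D * ((n'-D).choose S * (L-1).choose I)))
      + (if S = 0 then 0 else
          k*(k-1) * (k^n' * k^I * (k-1)^(S-1) * (n'.choose D * ((n'-D).choose (S-1) * (L-1).choose I))))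
      + (if D = 0 then 0 else
          k * (k^n' * k^I * (k-1)^S * (n'.choose (D-1) * ((n'-(D-1)).choose S * (L-1).choose I))))
      + (if q = true ∧ I ≠ 0 then
          k * (k^(n'+1) * k^(I-1) * (k-1)^S * ((n'+1).choose D * ((n'+1-D).choose S * (L-1).choose (I-1))))
        else 0)
      ≤ k^(n'+1) * k^I * (k-1)^S * ((n'+1).choose D * ((n'+1-D).choose S * (if q then L else L-1).choose I)) := by
  have hkey := key_binom n' D S hDS
  have main3 : k * (k^n' * k^I * (k-1)^S * (n'.choose D * ((n'-D).choose S * (L-1).choose I)))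
      + (if S = 0 then 0 else
          k*(k-1) * (k^n' * k^I * (k-1)^(S-1) * (n'.choose D * ((n'-D).choose (S-1) * (L-1).choose I))))
      + (if D = 0 then 0 else
          k * (k^n' * k^I * (k-1)^S * (n'.choose (D-1) * ((n'-(D-1)).choose S * (L-1).choose I))))
      ≤ k^(n'+1) * k^I * (k-1)^S * (L-1).choose I * ((n'+1).choose D * ((n'+1-D).choose S)) := by
    have expand : k * (k^n' * k^I * (k-1)^S * (n'.choose D * ((n'-D).choose S * (L-1).choose I)))
        + (if S = 0 then 0 else
            k*(k-1) * (k^n' * k^I * (k-1)^(S-1) * (n'.choose D * ((n'-D).choose (S-1) * (L-1).choose I))))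
        + (if D = 0 then 0 else
            k * (k^n' * k^I * (k-1)^S * (n'.choose (D-1) * ((n'-(D-1)).choose S * (L-1).choose I))))
        = k^(n'+1) * k^I * (k-1)^S * (L-1).choose I *
            (n'.choose D * (n' - D).choose S
              + (if S = 0 then 0 else n'.choose D * (n' - D).choose (S - 1))
              + (if D = 0 then 0 else n'.choose (D - 1) * (n' + 1 - D).choose S)) := by
      rcases S with _ | S' <;> rcases D with _ | D'
      · rw [if_pos rfl, if_pos rfl, if_pos rfl, if_pos rfl]; ring
      · rw [if_pos rfl, if_pos rfl, if_neg (Nat.succ_ne_zero D'), if_neg (Nat.succ_ne_zero D')]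
        simp only [Nat.add_sub_cancel, add_zero, zero_add,
          show n' + 1 - (D' + 1) = n' - D' from by omega]
        ring
      · rw [if_neg (Nat.succ_ne_zero S'), if_neg (Nat.succ_ne_zero S'), if_pos rfl, if_pos rfl]
        simp only [Nat.add_sub_cancel, add_zero]
        ring
      · rw [if_neg (Nat.succ_ne_zero S'), if_neg (Nat.succ_ne_zero S'),
          if_neg (Nat.succ_ne_zero D'), if_neg (Nat.succ_ne_zero D')]
        simp only [Nat.add_sub_cancel, show n' + 1 - (D' + 1) = n' - D' from by omega]
        ring
    rw [expand]
    exact Nat.mul_le_mul_left _ hkey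
  cases q with
  | false =>
    rw [if_neg (by simp : ¬((false = true) ∧ I ≠ 0)), add_zero,
      show (if false = true then L else L - 1) = L - 1 from rfl]
    calc _ ≤ k^(n'+1) * k^I * (k-1)^S * (L-1).choose I * ((n'+1).choose D * ((n'+1-D).choose S)) :=
          main3
      _ = k^(n'+1) * k^I * (k-1)^S * ((n'+1).choose D * ((n'+1-D).choose S * (L-1).choose I)) := by
          ring
  | true =>
    rw [show (if true = true then L else L - 1) = L from rfl]
    by_cases hI : I = 0
    · rw [if_neg (by simp [hI] : ¬((true = true) ∧ I ≠ 0)), add_zero]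
      subst hI
      calc _ ≤ k^(n'+1) * k^0 * (k-1)^S * (L-1).choose 0 * ((n'+1).choose D * ((n'+1-D).choose S)) :=
            main3
        _ = k^(n'+1) * k^0 * (k-1)^S * ((n'+1).choose D * ((n'+1-D).choose S * L.choose 0)) := by
            simp only [Nat.choose_zero_right, mul_one, pow_zero]
    · have hL : 1 ≤ L := by omega
      rw [if_pos (⟨rfl, hI⟩ : (true = true) ∧ I ≠ 0)]
      have pasc : L.choose I = (L-1).choose I + (L-1).choose (I-1) := by
        have h1 : L = (L-1)+1 := by omega
        have h2 : I = (I-1)+1 := by omega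
        calc L.choose I = ((L-1)+1).choose ((I-1)+1) := by rw [← h1, ← h2]
          _ = (L-1).choose (I-1) + (L-1).choose ((I-1)+1) := Nat.choose_succ_succ _ _
          _ = (L-1).choose I + (L-1).choose (I-1) := by rw [← h2]; omega
      have hpow : k ^ I = k ^ (I-1) * k := by
        conv_lhs => rw [show I = (I-1)+1 from by omega]
        rw [pow_succ]
      have t4eq : k * (k^(n'+1) * k^(I-1) * (k-1)^S * ((n'+1).choose D * ((n'+1-D).choose S * (L-1).choose (I-1))))
          = k^(n'+1) * k^I * (k-1)^S * (L-1).choose (I-1) * ((n'+1).choose D * ((n'+1-D).choose S)) := by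
        rw [hpow]; ring
      calc _ ≤ k^(n'+1) * k^I * (k-1)^S * (L-1).choose I * ((n'+1).choose D * ((n'+1-D).choose S))
            + k^(n'+1) * k^I * (k-1)^S * (L-1).choose (I-1) * ((n'+1).choose D * ((n'+1-D).choose S)) :=
            Nat.add_le_add main3 (le_of_eq t4eq)
        _ = k^(n'+1) * k^I * (k-1)^S * ((n'+1).choose D * ((n'+1-D).choose S * L.choose I)) := by
            rw [pasc]; ring

theorem card_ne_pairs (k : ℕ) :
    ((Finset.univ : Finset (Fin k × Fin k)).filter fun ab => ab.1 ≠ ab.2).card = k * (k-1) := by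
  classical
  have hdiag : ((Finset.univ : Finset (Fin k × Fin k)).filter fun ab => ab.1 = ab.2)
      = Finset.univ.image (fun a : Fin k => (a, a)) := by
    ext ⟨a, b⟩
    simp only [Finset.mem_filter, Finset.mem_univ, true_and, Finset.mem_image, Prod.mk.injEq]
    constructor
    · rintro rfl; exact ⟨a, rfl, rfl⟩
    · rintro ⟨c, rfl, rfl⟩; rfl
  have hdcard : ((Finset.univ : Finset (Fin k × Fin k)).filter fun ab => ab.1 = ab.2).card = k := by
    rw [hdiag, Finset.card_image_of_injective _ (fun a b h => (Prod.ext_iff.mp h).1),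
      Finset.card_univ, Fintype.card_fin]
  have htot := Finset.card_filter_add_card_filter_not
    (s := (Finset.univ : Finset (Fin k × Fin k))) (p := fun ab => ab.1 = ab.2)
  have huniv : (Finset.univ : Finset (Fin k × Fin k)).card = k * k := by
    rw [Finset.card_univ, Fintype.card_prod, Fintype.card_fin]
  have hmul : k * (k - 1) + k = k * k := by
    rcases k with _ | m
    · simp
    · simp only [Nat.succ_sub_one]; ring
  have : ((Finset.univ : Finset (Fin k × Fin k)).filter fun ab => ¬ ab.1 = ab.2).card
      = k * k - k := by omega
  simpa [ne_eq] using by omega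

theorem countAl_zero_le (k : ℕ) (q : Bool) (L D I S : ℕ) :
    countAl k q 0 L D I S ≤
      k^0 * k^I * (k-1)^S *
        (Nat.choose 0 D * ((0-D).choose S * (if q then L else L-1).choose I)) := by
  unfold countAl
  rcases Finset.eq_empty_or_nonempty
      ((allLists k 0 ×ˢ allLists k L).filter fun p => Al q D I S p.1 p.2) with he | hne
  · rw [he]; simp
  obtain ⟨⟨x, y⟩, hw⟩ := hne
  simp only [Finset.mem_filter, Finset.mem_product, mem_allLists] at hw
  obtain ⟨⟨hx, hy⟩, hal⟩ := hw
  obtain ⟨hlen, hDS, hIS⟩ := hal.lengths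
  have hD : D = 0 := by omega
  have hS : S = 0 := by omega
  subst hD hS
  have hxnil : x = [] := List.eq_nil_of_length_eq_zero hx
  subst hxnil
  cases q with
  | true =>
    have hIL : I = L := by omega
    subst hIL
    have hcard : ((allLists k 0 ×ˢ allLists k I).filter fun p => Al true 0 I 0 p.1 p.2).card
        ≤ 1 * k ^ I := by
      refine (Finset.card_le_card (Finset.filter_subset _ _)).trans ?_
      rw [Finset.card_product, card_allLists, card_allLists, pow_zero]
    simpa [Nat.choose_self] using hcard
  | false =>
    cases hal
    have hL : L = 0 := by omega
    subst hL
    have hcard : ((allLists k 0 ×ˢ allLists k 0).filter fun p => Al false 0 0 0 p.1 p.2).card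
        ≤ 1 := by
      refine (Finset.card_le_card (Finset.filter_subset _ _)).trans ?_
      rw [Finset.card_product, card_allLists]
      simp
    simpa using hcard

theorem countAl_le (k : ℕ) : ∀ (t : ℕ) (q : Bool) (n L D I S : ℕ), n + L ≤ t →
    countAl k q n L D I S ≤
      k^n * k^I * (k-1)^S *
        (n.choose D * ((n-D).choose S * (if q then L else L-1).choose I)) := by
  intro t
  induction t with
  | zero =>
    intro q n L D I S hle
    have hn : n = 0 := by omega
    subst hn
    exact countAl_zero_le k q L D I S
  | succ t ih =>
    intro q n L D I S hle
    rcases n with _ | n'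
    · exact countAl_zero_le k q L D I S
    unfold countAl
    rcases Finset.eq_empty_or_nonempty
        ((allLists k (n'+1) ×ˢ allLists k L).filter fun p => Al q D I S p.1 p.2) with he | hne
    · rw [he]; simp
    obtain ⟨⟨xw, yw⟩, hw⟩ := hne
    simp only [Finset.mem_filter, Finset.mem_product, mem_allLists] at hw
    obtain ⟨⟨hxw, hyw⟩, halw⟩ := hw
    obtain ⟨hlen0, hDS0, _⟩ := halw.lengths
    have hlen : n' + 1 + I = L + D := by omega
    have hDS : D + S ≤ n' + 1 := by omega
    set B1 := ((Finset.univ : Finset (Fin k)) ×ˢ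
        ((allLists k n' ×ˢ allLists k (L-1)).filter fun p => Al true D I S p.1 p.2)).image
        (fun r : Fin k × (List (Fin k) × List (Fin k)) => (r.1 :: r.2.1, r.1 :: r.2.2)) with hB1
    set B2 := (((Finset.univ : Finset (Fin k × Fin k)).filter fun ab => ab.1 ≠ ab.2) ×ˢ
        ((allLists k n' ×ˢ allLists k (L-1)).filter fun p => S ≠ 0 ∧ Al true D I (S-1) p.1 p.2)).image
        (fun r : (Fin k × Fin k) × (List (Fin k) × List (Fin k)) =>
          (r.1.1 :: r.2.1, r.1.2 :: r.2.2)) with hB2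
    set B3 := ((Finset.univ : Finset (Fin k)) ×ˢ
        ((allLists k n' ×ˢ allLists k L).filter fun p => D ≠ 0 ∧ Al false (D-1) I S p.1 p.2)).image
        (fun r : Fin k × (List (Fin k) × List (Fin k)) => (r.1 :: r.2.1, r.2.2)) with hB3
    set B4 := ((Finset.univ : Finset (Fin k)) ×ˢ
        ((allLists k (n'+1) ×ˢ allLists k (L-1)).filter fun p =>
          (q = true ∧ I ≠ 0) ∧ Al true D (I-1) S p.1 p.2)).image
        (fun r : Fin k × (List (Fin k) × List (Fin k)) => (r.2.1, r.1 :: r.2.2)) with hB4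
    have hsub : ((allLists k (n'+1) ×ˢ allLists k L).filter fun p => Al q D I S p.1 p.2)
        ⊆ B1 ∪ B2 ∪ B3 ∪ B4 := by
      rintro ⟨x, y⟩ hp
      simp only [Finset.mem_filter, Finset.mem_product, mem_allLists] at hp
      obtain ⟨⟨hx, hy⟩, hal⟩ := hp
      cases x with
      | nil => simp at hx
      | cons a x' =>
        have hx' : x'.length = n' := by simpa using hx
        cases hal with
        | mtch _ h =>
          refine Finset.mem_union_left _ (Finset.mem_union_left _ (Finset.mem_union_left _ ?_))
          rw [hB1]
          refine Finset.mem_image.mpr ⟨(a, (x', _)), Finset.mem_product.mpr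
            ⟨Finset.mem_univ _, Finset.mem_filter.mpr ⟨Finset.mem_product.mpr
              ⟨mem_allLists.mpr hx', mem_allLists.mpr ?_⟩, h⟩⟩, rfl⟩
          simp only [List.length_cons] at hy
          dsimp only
          omega
        | @sub _ _ _ S₀ _ _ _ b hab h =>
          refine Finset.mem_union_left _ (Finset.mem_union_left _ (Finset.mem_union_right _ ?_))
          rw [hB2]
          refine Finset.mem_image.mpr ⟨((a, b), (x', _)), Finset.mem_product.mpr
            ⟨Finset.mem_filter.mpr ⟨Finset.mem_univ _, hab⟩,
             Finset.mem_filter.mpr ⟨Finset.mem_product.mpr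
              ⟨mem_allLists.mpr hx', mem_allLists.mpr ?_⟩, ⟨Nat.succ_ne_zero S₀, ?_⟩⟩⟩, rfl⟩
          · simp only [List.length_cons] at hy
            dsimp only
            omega
          · simpa using h
        | @del _ D₀ _ _ _ _ _ h =>
          refine Finset.mem_union_left _ (Finset.mem_union_right _ ?_)
          rw [hB3]
          refine Finset.mem_image.mpr ⟨(a, (x', y)), Finset.mem_product.mpr
            ⟨Finset.mem_univ _, Finset.mem_filter.mpr ⟨Finset.mem_product.mpr
              ⟨mem_allLists.mpr hx', mem_allLists.mpr hy⟩,
              ⟨Nat.succ_ne_zero D₀, by simpa using h⟩⟩⟩, rfl⟩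
        | @ins _ I₀ _ _ _ b h =>
          refine Finset.mem_union_right _ ?_
          rw [hB4]
          refine Finset.mem_image.mpr ⟨(b, (a :: x', _)), Finset.mem_product.mpr
            ⟨Finset.mem_univ _, Finset.mem_filter.mpr ⟨Finset.mem_product.mpr
              ⟨mem_allLists.mpr (by simpa using hx), mem_allLists.mpr ?_⟩,
              ⟨⟨rfl, Nat.succ_ne_zero I₀⟩, by simpa using h⟩⟩⟩, rfl⟩
          simp only [List.length_cons] at hy
          dsimp only
          omega
    have hcard : ((allLists k (n'+1) ×ˢ allLists k L).filter fun p => Al q D I S p.1 p.2).card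
        ≤ B1.card + B2.card + B3.card + B4.card := by
      calc _ ≤ (B1 ∪ B2 ∪ B3 ∪ B4).card := Finset.card_le_card hsub
        _ ≤ (B1 ∪ B2 ∪ B3).card + B4.card := Finset.card_union_le _ _
        _ ≤ ((B1 ∪ B2).card + B3.card) + B4.card :=
            Nat.add_le_add_right (Finset.card_union_le _ _) _
        _ ≤ ((B1.card + B2.card) + B3.card) + B4.card :=
            Nat.add_le_add_right (Nat.add_le_add_right (Finset.card_union_le _ _) _) _
    have h1 : B1.card ≤ k * (k^n' * k^I * (k-1)^S *
        (n'.choose D * ((n'-D).choose S * (L-1).choose I))) := by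
      have := ih true n' (L-1) D I S (by omega)
      simp only [if_pos rfl] at this
      refine Finset.card_image_le.trans ?_
      rw [Finset.card_product, Finset.card_univ, Fintype.card_fin]
      exact Nat.mul_le_mul_left _ this
    have h2 : B2.card ≤ (if S = 0 then 0 else
        k*(k-1) * (k^n' * k^I * (k-1)^(S-1) *
          (n'.choose D * ((n'-D).choose (S-1) * (L-1).choose I)))) := by
      by_cases hS : S = 0
      · rw [if_pos hS, hB2]
        have hempty : ((allLists k n' ×ˢ allLists k (L-1)).filter
            fun p => S ≠ 0 ∧ Al true D I (S-1) p.1 p.2) = ∅ :=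
          Finset.filter_false_of_mem (fun p _ h => h.1 hS)
        rw [hempty]
        simp
      · rw [if_neg hS]
        have hinner : ((allLists k n' ×ˢ allLists k (L-1)).filter
            fun p => S ≠ 0 ∧ Al true D I (S-1) p.1 p.2).card ≤
            countAl k true n' (L-1) D I (S-1) := by
          unfold countAl
          exact Finset.card_le_card (Finset.monotone_filter_right _
            (fun p _ h => h.2))
        have := (hinner.trans (ih true n' (L-1) D I (S-1) (by omega)))
        simp only [if_pos rfl] at this
        refine Finset.card_image_le.trans ?_
        rw [Finset.card_product, card_ne_pairs]
        exact Nat.mul_le_mul_left _ this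
    have h3 : B3.card ≤ (if D = 0 then 0 else
        k * (k^n' * k^I * (k-1)^S *
          (n'.choose (D-1) * ((n'-(D-1)).choose S * (L-1).choose I)))) := by
      by_cases hD : D = 0
      · rw [if_pos hD, hB3]
        have hempty : ((allLists k n' ×ˢ allLists k L).filter
            fun p => D ≠ 0 ∧ Al false (D-1) I S p.1 p.2) = ∅ :=
          Finset.filter_false_of_mem (fun p _ h => h.1 hD)
        rw [hempty]
        simp
      · rw [if_neg hD]
        have hinner : ((allLists k n' ×ˢ allLists k L).filter
            fun p => D ≠ 0 ∧ Al false (D-1) I S p.1 p.2).card ≤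
            countAl k false n' L (D-1) I S := by
          unfold countAl
          exact Finset.card_le_card (Finset.monotone_filter_right _ (fun p _ h => h.2))
        have := (hinner.trans (ih false n' L (D-1) I S (by omega)))
        simp only [Bool.false_eq_true, if_false] at this
        refine Finset.card_image_le.trans ?_
        rw [Finset.card_product, Finset.card_univ, Fintype.card_fin]
        exact Nat.mul_le_mul_left _ this
    have h4 : B4.card ≤ (if q = true ∧ I ≠ 0 then
        k * (k^(n'+1) * k^(I-1) * (k-1)^S *
          ((n'+1).choose D * ((n'+1-D).choose S * (L-1).choose (I-1)))) else 0) := by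
      by_cases hq : q = true ∧ I ≠ 0
      · rw [if_pos hq]
        have hL : 1 ≤ L := by omega
        have hinner : ((allLists k (n'+1) ×ˢ allLists k (L-1)).filter
            fun p => (q = true ∧ I ≠ 0) ∧ Al true D (I-1) S p.1 p.2).card ≤
            countAl k true (n'+1) (L-1) D (I-1) S := by
          unfold countAl
          exact Finset.card_le_card (Finset.monotone_filter_right _ (fun p _ h => h.2))
        have := (hinner.trans (ih true (n'+1) (L-1) D (I-1) S (by omega)))
        simp only [if_pos rfl] at this
        refine Finset.card_image_le.trans ?_
        rw [Finset.card_product, Finset.card_univ, Fintype.card_fin]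
        exact Nat.mul_le_mul_left _ this
      · rw [if_neg hq, hB4]
        have hempty : ((allLists k (n'+1) ×ˢ allLists k (L-1)).filter
            fun p => (q = true ∧ I ≠ 0) ∧ Al true D (I-1) S p.1 p.2) = ∅ :=
          Finset.filter_false_of_mem (fun p _ h => hq h.1)
        rw [hempty]
        simp
    calc ((allLists k (n'+1) ×ˢ allLists k L).filter fun p => Al q D I S p.1 p.2).card
        ≤ B1.card + B2.card + B3.card + B4.card := hcard
      _ ≤ _ := by
          refine (Nat.add_le_add (Nat.add_le_add (Nat.add_le_add h1 h2) h3) h4).trans ?_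
          exact bnd_step k n' L D I S q hlen hDS

theorem binEntropy_eq (t : ℝ) : binEntropy t = Real.binEntropy t / Real.log 2 := by
  rw [binEntropy, Real.binEntropy, Real.logb, Real.logb, Real.log_inv, Real.log_inv]
  ring

theorem binEntropy_nonneg {t : ℝ} (h0 : 0 ≤ t) (h1 : t ≤ 1) : 0 ≤ binEntropy t := by
  rw [binEntropy_eq]
  exact div_nonneg (Real.binEntropy_nonneg h0 h1) (Real.log_nonneg one_le_two)

theorem binEntropy_zero' : binEntropy 0 = 0 := by simp [binEntropy]

theorem binEntropy_one' : binEntropy 1 = 0 := by simp [binEntropy]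

theorem choose_le_rpow (n d : ℕ) (hd : d ≤ n) :
    (n.choose d : ℝ) ≤ (2:ℝ) ^ ((n:ℝ) * binEntropy ((d:ℝ)/(n:ℝ))) := by
  rcases Nat.eq_zero_or_pos n with rfl | hn
  · have hd0 : d = 0 := by omega
    subst hd0
    simp [binEntropy_zero']
  rcases Nat.eq_zero_or_pos d with rfl | hdpos
  · simp [binEntropy_zero']
  rcases eq_or_lt_of_le hd with rfl | hdn
  · rw [div_self (by positivity : (d:ℝ) ≠ 0)]
    simp [binEntropy_one']
  -- main case : 0 < d < n
  set p : ℝ := (d:ℝ)/(n:ℝ) with hp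
  have hp0 : 0 < p := div_pos (by exact_mod_cast hdpos) (by exact_mod_cast hn)
  have hp1 : p < 1 := (div_lt_one (by exact_mod_cast hn)).mpr (by exact_mod_cast hdn)
  have hq0 : 0 < 1 - p := by linarith
  have key : (p ^ d * (1-p) ^ (n-d)) * (n.choose d : ℝ) ≤ 1 := by
    have hb := add_pow p (1-p) n
    rw [show p + (1-p) = 1 from by ring, one_pow] at hb
    conv_rhs => rw [hb]
    refine Finset.single_le_sum (f := fun i => p ^ i * (1-p) ^ (n-i) * (n.choose i : ℝ))
      (fun i _ => by positivity) (Finset.mem_range.mpr (show d < n + 1 by omega))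
  have hnp : (n:ℝ) * p = (d:ℝ) := by
    rw [hp]; field_simp
  have hnq : (n:ℝ) * (1 - p) = ((n-d:ℕ):ℝ) := by
    push_cast [hd]
    rw [hp]; field_simp
  have hexp : (n:ℝ) * binEntropy p
      = -((d:ℝ) * Real.logb 2 p) - ((n-d:ℕ):ℝ) * Real.logb 2 (1-p) := by
    rw [binEntropy, ← hnp, ← hnq]
    ring
  have hA : (2:ℝ) ^ ((n:ℝ) * binEntropy p) = (p ^ d * (1-p) ^ (n-d))⁻¹ := by
    rw [hexp, show -((d:ℝ) * Real.logb 2 p) - ((n-d:ℕ):ℝ) * Real.logb 2 (1-p)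
        = -((Real.logb 2 p * (d:ℝ)) + (Real.logb 2 (1-p) * ((n-d:ℕ):ℝ))) from by ring,
      Real.rpow_neg (by norm_num : (0:ℝ) ≤ 2), Real.rpow_add two_pos,
      Real.rpow_mul (by norm_num : (0:ℝ) ≤ 2), Real.rpow_mul (by norm_num : (0:ℝ) ≤ 2),
      Real.rpow_logb two_pos (by norm_num) hp0, Real.rpow_logb two_pos (by norm_num) hq0,
      Real.rpow_natCast, Real.rpow_natCast]
  have hApos : 0 < p ^ d * (1-p) ^ (n-d) := by positivity
  have hC : (n.choose d : ℝ) ≤ 1 / (p ^ d * (1-p) ^ (n-d)) := by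
    rw [le_div_iff₀ hApos]
    calc (n.choose d:ℝ) * (p^d*(1-p)^(n-d)) = (p^d*(1-p)^(n-d)) * (n.choose d:ℝ) := by ring
      _ ≤ 1 := key
  rw [hA, ← one_div]
  exact hC

theorem rpow_eq_pow_logb {x : ℝ} (hx : 0 < x) (S : ℕ) :
    x ^ S = (2:ℝ) ^ ((S:ℝ) * Real.logb 2 x) := by
  rw [mul_comm, Real.rpow_mul (by norm_num : (0:ℝ) ≤ 2),
    Real.rpow_logb two_pos (by norm_num) hx, Real.rpow_natCast]

theorem term_le (k n D S : ℕ) (hk : 2 ≤ k) (hn : 0 < n) (hD : D ≤ n) (hS : S ≤ n - D) :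
    ((k^n * k^D * (k-1)^S * (n.choose D * ((n-D).choose S * n.choose D)) : ℕ) : ℝ)
      ≤ (k:ℝ)^(2*n) * (2:ℝ) ^ ((n:ℝ) * gExp k ((2*D+S : ℝ)/n) ((D:ℝ)/n)) := by
  have hnR : (0:ℝ) < n := by exact_mod_cast hn
  have hkR : (0:ℝ) < k := by positivity
  have hk1R : (0:ℝ) < (k:ℝ) - 1 := by
    have : (2:ℝ) ≤ (k:ℝ) := by exact_mod_cast hk
    linarith
  -- exponent identity
  have h1 : (2*(D:ℝ)+(S:ℝ))/(n:ℝ) - 2*((D:ℝ)/(n:ℝ)) = (S:ℝ)/(n:ℝ) := by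
    field_simp
    ring
  have h2 : 1 - (D:ℝ)/(n:ℝ) = ((n-D:ℕ):ℝ)/(n:ℝ) := by
    push_cast [hD]
    field_simp
  have h3 : ((S:ℝ)/(n:ℝ)) / (((n-D:ℕ):ℝ)/(n:ℝ)) = (S:ℝ)/((n-D:ℕ):ℝ) := by
    rcases eq_or_ne ((n-D:ℕ):ℝ) 0 with h | h
    · rw [h]
      simp
    · field_simp
  have hg : (n:ℝ) * gExp k ((2*(D:ℝ)+(S:ℝ))/(n:ℝ)) ((D:ℝ)/(n:ℝ))
      = (S:ℝ) * Real.logb 2 ((k:ℝ)-1) - ((n-D:ℕ):ℝ) * Real.logb 2 (k:ℝ)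
        + 2*((n:ℝ) * binEntropy ((D:ℝ)/(n:ℝ)))
        + ((n-D:ℕ):ℝ) * binEntropy ((S:ℝ)/((n-D:ℕ):ℝ)) := by
    rw [gExp, h1, h2, h3]
    have hns : ((n-D:ℕ):ℝ) = (n:ℝ) - (D:ℝ) := by push_cast [hD]; ring
    rw [hns]
    field_simp
  -- pieces
  have c1 : (n.choose D : ℝ) ≤ (2:ℝ) ^ ((n:ℝ) * binEntropy ((D:ℝ)/(n:ℝ))) :=
    choose_le_rpow n D hD
  have c2 : (((n-D).choose S : ℕ) : ℝ)
      ≤ (2:ℝ) ^ (((n-D:ℕ):ℝ) * binEntropy ((S:ℝ)/((n-D:ℕ):ℝ))) :=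
    choose_le_rpow (n-D) S hS
  have e1 : (((k-1:ℕ)^S : ℕ) : ℝ) = (2:ℝ) ^ ((S:ℝ) * Real.logb 2 ((k:ℝ)-1)) := by
    push_cast [show (1:ℕ) ≤ k from by omega]
    exact rpow_eq_pow_logb hk1R S
  have e2 : (((k:ℕ)^n * (k:ℕ)^D : ℕ) : ℝ)
      = (k:ℝ)^(2*n) * (2:ℝ) ^ (-(((n-D:ℕ):ℝ) * Real.logb 2 (k:ℝ))) := by
    push_cast
    rw [Real.rpow_neg (by norm_num : (0:ℝ) ≤ 2), ← rpow_eq_pow_logb hkR (n-D)]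
    rw [eq_comm, mul_comm ((k:ℝ)^(2*n)), inv_mul_eq_div, div_eq_iff (by positivity)]
    rw [← pow_add, ← pow_add]
    congr 1
    omega
  -- combine
  push_cast [show (1:ℕ) ≤ k from by omega]
  push_cast [show (1:ℕ) ≤ k from by omega] at e1 e2 c2
  calc (k:ℝ)^n * (k:ℝ)^D * ((k:ℝ)-1)^S * ((n.choose D : ℝ) * ((((n-D).choose S : ℕ):ℝ) * (n.choose D:ℝ)))
      ≤ ((k:ℝ)^(2*n) * (2:ℝ) ^ (-(((n-D:ℕ):ℝ) * Real.logb 2 (k:ℝ))))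
        * ((2:ℝ) ^ ((S:ℝ) * Real.logb 2 ((k:ℝ)-1)))
        * ((2:ℝ) ^ ((n:ℝ) * binEntropy ((D:ℝ)/(n:ℝ)))
            * ((2:ℝ) ^ (((n-D:ℕ):ℝ) * binEntropy ((S:ℝ)/((n-D:ℕ):ℝ)))
              * (2:ℝ) ^ ((n:ℝ) * binEntropy ((D:ℝ)/(n:ℝ))))) := by
        rw [← e1, ← e2]
        push_cast
        have hkn : (0:ℝ) ≤ (k:ℝ)^n * (k:ℝ)^D * ((k:ℝ)-1)^S := by positivity
        refine mul_le_mul_of_nonneg_left ?_ hkn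
        refine mul_le_mul c1 (mul_le_mul c2 c1 (by positivity) (by positivity))
          (by positivity) (by positivity)
    _ = (k:ℝ)^(2*n) * (2:ℝ) ^ ((n:ℝ) * gExp k ((2*(D:ℝ)+(S:ℝ))/(n:ℝ)) ((D:ℝ)/(n:ℝ))) := by
        rw [hg, mul_assoc, mul_assoc]
        congr 1
        rw [← Real.rpow_add two_pos, ← Real.rpow_add two_pos, ← Real.rpow_add two_pos,
          ← Real.rpow_add two_pos]
        congr 1
        ring

/-- The set of "bad" pairs: pairs of strings (as functions) at edit distance at most `m`. -/
noncomputable def badF (k n m : ℕ) : Finset ((Fin n → Fin k) × (Fin n → Fin k)) :=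
  Finset.univ.filter fun p => editDist (List.ofFn p.1) (List.ofFn p.2) ≤ m

theorem badF_card_le (k n m : ℕ) :
    (badF k n m).card ≤ ∑ D ∈ Finset.range (m+1), ∑ S ∈ Finset.range (m+1),
      (if 2*D+S ≤ m then countAl k true n n D D S else 0) := by
  set U := (Finset.range (m+1) ×ˢ Finset.range (m+1)).biUnion
    (fun ds => if 2*ds.1+ds.2 ≤ m then
      ((allLists k n ×ˢ allLists k n).filter fun p => Al true ds.1 ds.1 ds.2 p.1 p.2)
      else ∅) with hU
  have hstep : (badF k n m).card ≤ U.card := by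
    refine Finset.card_le_card_of_injOn
      (fun p => (List.ofFn p.1, List.ofFn p.2)) ?_ ?_
    · intro p hp
      have hp : levenshtein Levenshtein.defaultCost (List.ofFn p.1) (List.ofFn p.2) ≤ m :=
        (Finset.mem_filter.mp (Finset.mem_coe.mp hp)).2
      obtain ⟨D, I, S, hsum, hal⟩ := exists_al (List.ofFn p.1) (List.ofFn p.2)
      obtain ⟨hlen, -, -⟩ := hal.lengths
      rw [List.length_ofFn, List.length_ofFn] at hlen
      have hID : I = D := by omega
      rw [hID] at hal
      rw [hU]
      refine Finset.mem_biUnion.mpr ⟨(D, S), Finset.mem_product.mpr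
        ⟨Finset.mem_range.mpr (by omega), Finset.mem_range.mpr (by omega)⟩, ?_⟩
      rw [if_pos (by omega : 2*D+S ≤ m)]
      exact Finset.mem_filter.mpr ⟨Finset.mem_product.mpr
        ⟨mem_allLists.mpr List.length_ofFn, mem_allLists.mpr List.length_ofFn⟩, hal⟩
    · intro p _ q _ h
      simp only [Prod.mk.injEq] at h
      exact Prod.ext (List.ofFn_injective h.1) (List.ofFn_injective h.2)
  refine hstep.trans ((Finset.card_biUnion_le).trans ?_)
  rw [Finset.sum_product]
  refine Finset.sum_le_sum fun D _ => Finset.sum_le_sum fun S _ => ?_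
  split_ifs with hcond
  · exact le_of_eq rfl
  · simp

theorem badF_card_le_real (k n m : ℕ) (hk : 2 ≤ k) (hn : 0 < n) (hm : m ≤ n) (ε : ℝ)
    (hT : ∀ D S : ℕ, D ≤ n → S ≤ n - D → 2*D+S ≤ m →
      gExp k ((2*(D:ℝ)+(S:ℝ))/(n:ℝ)) ((D:ℝ)/(n:ℝ)) ≤ -ε) :
    ((badF k n m).card : ℝ) ≤ ((m:ℝ)+1)^2 * ((k:ℝ)^(2*n) * (2:ℝ) ^ (-(ε * (n:ℝ)))) := by
  have h0 := badF_card_le k n m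
  have h1 : ((badF k n m).card : ℝ) ≤
      ∑ D ∈ Finset.range (m+1), ∑ S ∈ Finset.range (m+1),
        (((if 2*D+S ≤ m then countAl k true n n D D S else 0) : ℕ) : ℝ) := by
    exact_mod_cast h0
  refine h1.trans ?_
  have h2 : ∀ D ∈ Finset.range (m+1), ∀ S ∈ Finset.range (m+1),
      (((if 2*D+S ≤ m then countAl k true n n D D S else 0) : ℕ) : ℝ)
        ≤ (k:ℝ)^(2*n) * (2:ℝ) ^ (-(ε * (n:ℝ))) := by
    intro D _ S _
    split_ifs with hcond
    · have hDn : D ≤ n := by omega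
      have hSn : S ≤ n - D := by omega
      have hcount := countAl_le k (n+n) true n n D D S le_rfl
      simp only [if_pos rfl] at hcount
      have hterm := term_le k n D S hk hn hDn hSn
      have hgle := hT D S hDn hSn hcond
      have hstep1 : ((countAl k true n n D D S : ℕ) : ℝ)
          ≤ ((k^n * k^D * (k-1)^S * (n.choose D * ((n-D).choose S * n.choose D)) : ℕ) : ℝ) := by
        exact_mod_cast hcount
      refine hstep1.trans (hterm.trans ?_)
      refine mul_le_mul_of_nonneg_left ?_ (by positivity)
      refine Real.rpow_le_rpow_of_exponent_le one_le_two ?_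
      calc (n:ℝ) * gExp k ((2*(D:ℝ)+(S:ℝ))/(n:ℝ)) ((D:ℝ)/(n:ℝ))
          ≤ (n:ℝ) * (-ε) := mul_le_mul_of_nonneg_left hgle (by positivity)
        _ = -(ε * (n:ℝ)) := by ring
    · simp only [Nat.cast_zero]
      positivity
  calc ∑ D ∈ Finset.range (m+1), ∑ S ∈ Finset.range (m+1),
        (((if 2*D+S ≤ m then countAl k true n n D D S else 0) : ℕ) : ℝ)
      ≤ ∑ _D ∈ Finset.range (m+1), ∑ _S ∈ Finset.range (m+1),
          ((k:ℝ)^(2*n) * (2:ℝ) ^ (-(ε * (n:ℝ)))) :=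
        Finset.sum_le_sum fun D hD => Finset.sum_le_sum fun S hS => h2 D hD S hS
    _ = ((m:ℝ)+1)^2 * ((k:ℝ)^(2*n) * (2:ℝ) ^ (-(ε * (n:ℝ)))) := by
        rw [Finset.sum_const, Finset.sum_const, Finset.card_range, nsmul_eq_mul,
          nsmul_eq_mul]
        push_cast
        ring

theorem binEntropy_continuous : Continuous binEntropy := by
  have : binEntropy = fun t => Real.binEntropy t / Real.log 2 := funext binEntropy_eq
  rw [this]
  exact Real.binEntropy_continuous.div_const _

theorem gExp_eq_qary (k : ℕ) (β δ : ℝ) (hδ : δ ≠ 1) :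
    gExp k β δ = (1-δ) * (Real.qaryEntropy k ((β-2*δ)/(1-δ)) / Real.log 2)
      - (1-δ) * Real.logb 2 k + 2 * binEntropy δ := by
  have h1 : (1:ℝ)-δ ≠ 0 := sub_ne_zero.mpr (Ne.symm hδ)
  rw [gExp, Real.qaryEntropy, binEntropy_eq ((β-2*δ)/(1-δ))]
  have h3 : Real.logb 2 ((k:ℝ)-1) = Real.log ((k:ℝ)-1) / Real.log 2 := rfl
  have h4 : Real.logb 2 (k:ℝ) = Real.log (k:ℝ) / Real.log 2 := rfl
  have hlog2 : Real.log 2 ≠ 0 := by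
    have := Real.log_pos one_lt_two
    linarith
  push_cast
  rw [h3, h4]
  field_simp
  ring

theorem qary_at_peak (k : ℕ) (hk : 2 ≤ k) :
    Real.qaryEntropy k (1 - 1/(k:ℝ)) = Real.log k := by
  have hk0 : (0:ℝ) < k := by positivity
  have hk2 : (2:ℝ) ≤ (k:ℝ) := by exact_mod_cast hk
  have hk1 : (0:ℝ) < (k:ℝ) - 1 := by linarith
  rw [Real.qaryEntropy, Real.binEntropy_one_sub, Real.binEntropy]
  have e1 : ((1:ℝ)/(k:ℝ))⁻¹ = (k:ℝ) := by
    rw [one_div, inv_inv]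
  have e2 : ((1:ℝ) - 1/(k:ℝ))⁻¹ = (k:ℝ) / ((k:ℝ)-1) := by
    rw [show (1:ℝ) - 1/(k:ℝ) = ((k:ℝ)-1)/(k:ℝ) from by field_simp, inv_div]
  rw [e1, e2, Real.log_div (by linarith) (by linarith)]
  push_cast
  field_simp
  ring

theorem gExp_mono (k : ℕ) (hk : 2 ≤ k) {β' β δ : ℝ} (hδ0 : 0 ≤ δ) (h2δ : 2*δ ≤ β')
    (hββ : β' ≤ β) (hβk : β ≤ 1 - 1/(k:ℝ)) :
    gExp k β' δ ≤ gExp k β δ := by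
  have hk0 : (0:ℝ) < k := by positivity
  have hk2 : (2:ℝ) ≤ (k:ℝ) := by exact_mod_cast hk
  have hkinv : 0 < 1/(k:ℝ) := by positivity
  have hδhalf : δ < 1/2 := by linarith
  have hδ1 : δ ≠ 1 := by intro h; rw [h] at hδhalf; norm_num at hδhalf
  have h1δ : (0:ℝ) < 1 - δ := by linarith
  rw [gExp_eq_qary k β' δ hδ1, gExp_eq_qary k β δ hδ1]
  have hmem : ∀ b : ℝ, 2*δ ≤ b → b ≤ 1 - 1/(k:ℝ) →
      (b-2*δ)/(1-δ) ∈ Set.Icc (0:ℝ) (1 - 1/(k:ℝ)) := by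
    intro b hb1 hb2
    constructor
    · exact div_nonneg (by linarith) h1δ.le
    · rw [div_le_iff₀ h1δ]
      nlinarith
  have htle : (β'-2*δ)/(1-δ) ≤ (β-2*δ)/(1-δ) := by gcongr
  have hq : Real.qaryEntropy k ((β'-2*δ)/(1-δ)) ≤ Real.qaryEntropy k ((β-2*δ)/(1-δ)) :=
    (Real.qaryEntropy_strictMonoOn hk).monotoneOn
      (by
        have := hmem β' h2δ (le_trans hββ hβk)
        simpa [one_div] using this)
      (by
        have := hmem β (le_trans h2δ hββ) hβk
        simpa [one_div] using this)
      htle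
  have hlog2 : (0:ℝ) < Real.log 2 := Real.log_pos one_lt_two
  have : (1-δ) * (Real.qaryEntropy k ((β'-2*δ)/(1-δ)) / Real.log 2)
      ≤ (1-δ) * (Real.qaryEntropy k ((β-2*δ)/(1-δ)) / Real.log 2) := by
    refine mul_le_mul_of_nonneg_left ?_ h1δ.le
    exact (div_le_div_iff_of_pos_right hlog2).mpr hq
  linarith

theorem gExp_continuousOn (k : ℕ) :
    ContinuousOn (fun p : ℝ × ℝ => gExp k p.1 p.2) {p : ℝ × ℝ | p.2 < 1} := by
  have hco : ContinuousOn (fun p : ℝ × ℝ => (p.1 - 2*p.2) / (1 - p.2))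
      {p : ℝ × ℝ | p.2 < 1} := by
    refine ContinuousOn.div (by fun_prop) (by fun_prop) ?_
    intro p hp
    simp only [Set.mem_setOf_eq] at hp
    exact ne_of_gt (by linarith : (0:ℝ) < 1 - p.2)
  unfold gExp
  refine ContinuousOn.add (ContinuousOn.add
    (ContinuousOn.sub (by fun_prop) (by fun_prop))
    ((continuous_const.mul (binEntropy_continuous.comp continuous_snd)).continuousOn)) ?_
  exact (Continuous.continuousOn (by fun_prop)).mul
    (binEntropy_continuous.comp_continuousOn hco)

theorem gExp_peak (k : ℕ) (hk : 2 ≤ k) {β δ' : ℝ} (hδ'0 : 0 ≤ δ') (hδ'1 : δ' < 1)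
    (hβeq : β = 2*δ' + (1-δ')*(1-1/(k:ℝ))) :
    gExp k β δ' = 2 * binEntropy δ' := by
  have h1δ : (1:ℝ) - δ' ≠ 0 := ne_of_gt (by linarith)
  rw [gExp_eq_qary k β δ' (ne_of_lt hδ'1)]
  have harg : (β - 2*δ')/(1-δ') = 1 - 1/(k:ℝ) := by
    rw [show β - 2*δ' = (1-δ') * (1-1/(k:ℝ)) from by rw [hβeq]; ring,
      mul_div_cancel_left₀ _ h1δ]
  rw [harg, qary_at_peak k hk, show Real.logb 2 (k:ℝ) = Real.log (k:ℝ) / Real.log 2 from rfl]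
  ring

theorem GExp_bddAbove (k : ℕ) {β : ℝ} (hβ1 : β ≤ 1) :
    BddAbove (gExp k β '' Set.Icc 0 (β/2)) := by
  have hmaps : ∀ δ ∈ Set.Icc (0:ℝ) (β/2), ((β, δ) : ℝ × ℝ) ∈ {p : ℝ × ℝ | p.2 < 1} := by
    intro δ hδ
    simp only [Set.mem_setOf_eq]
    have := hδ.2
    linarith
  have hcont : ContinuousOn (fun δ : ℝ => gExp k β δ) (Set.Icc 0 (β/2)) := by
    have : (fun δ : ℝ => gExp k β δ)
        = (fun p : ℝ × ℝ => gExp k p.1 p.2) ∘ (fun δ : ℝ => (β, δ)) := rfl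
    rw [this]
    exact (gExp_continuousOn k).comp
      ((continuous_const.prodMk continuous_id).continuousOn) hmaps
  exact (isCompact_Icc.image_of_continuousOn hcont).bddAbove

theorem beta_le_of_G_neg (k : ℕ) (hk : 2 ≤ k) {β : ℝ} (hβ0 : 0 ≤ β) (hβ1 : β ≤ 1)
    (hG : GExp k β < 0) : β ≤ 1 - 1/(k:ℝ) := by
  by_contra hcon
  push_neg at hcon
  have hk0 : (0:ℝ) < k := by positivity
  have hk2 : (2:ℝ) ≤ (k:ℝ) := by exact_mod_cast hk
  set δ' : ℝ := ((k:ℝ)*β - (k:ℝ) + 1)/((k:ℝ)+1) with hδ'def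
  have hkk : (k:ℝ) * (1/(k:ℝ)) = 1 := by field_simp
  have hnum : 0 ≤ (k:ℝ)*β - (k:ℝ) + 1 := by
    nlinarith [mul_lt_mul_of_pos_left hcon hk0]
  have hδ'0 : 0 ≤ δ' := div_nonneg hnum (by linarith)
  have hδ'le : δ' ≤ β/2 := by
    rw [hδ'def, div_le_div_iff₀ (by linarith) two_pos]
    nlinarith [mul_le_mul_of_nonneg_left hβ1 (le_of_lt hk0)]
  have hδ'1 : δ' < 1 := by
    have : β/2 ≤ 1/2 := by linarith
    linarith
  have hβeq : β = 2*δ' + (1-δ')*(1-1/(k:ℝ)) := by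
    rw [hδ'def]
    field_simp
    ring
  have hpeak := gExp_peak k hk hδ'0 hδ'1 hβeq
  have hnn : 0 ≤ gExp k β δ' := by
    rw [hpeak]
    have := binEntropy_nonneg hδ'0 (by linarith : δ' ≤ 1)
    linarith
  have hle : gExp k β δ' ≤ GExp k β :=
    le_csSup (GExp_bddAbove k hβ1) ⟨δ', ⟨hδ'0, hδ'le⟩, rfl⟩
  linarith

theorem exists_eps (k : ℕ) (hk : 2 ≤ k) {β : ℝ} (hβ0 : 0 ≤ β) (hβ1 : β ≤ 1)
    (hG : GExp k β < 0) :
    ∃ ε : ℝ, 0 < ε ∧ ∀ b d : ℝ, 0 ≤ d → 2*d ≤ b → b ≤ β → gExp k b d ≤ -ε := by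
  have hβk := beta_le_of_G_neg k hk hβ0 hβ1 hG
  set T : Set (ℝ×ℝ) := {p | 0 ≤ p.2 ∧ 2*p.2 ≤ p.1 ∧ p.1 ≤ β} with hT
  have hclosed : IsClosed T := by
    exact (isClosed_le continuous_const continuous_snd).inter
      ((isClosed_le (by fun_prop) continuous_fst).inter
        (isClosed_le continuous_fst continuous_const))
  have hsubset : T ⊆ Set.Icc (0:ℝ) β ×ˢ Set.Icc (0:ℝ) (β/2) := by
    rintro ⟨b, d⟩ ⟨h1, h2, h3⟩
    simp only [Set.mem_prod, Set.mem_Icc]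
    constructor
    · constructor <;> [linarith; exact h3]
    · constructor <;> [exact h1; linarith]
  have hcompact : IsCompact T :=
    (isCompact_Icc.prod isCompact_Icc).of_isClosed_subset hclosed hsubset
  have hTne : T.Nonempty := ⟨(0, 0), by simp [hT, hβ0]⟩
  have hcont : ContinuousOn (fun p : ℝ×ℝ => gExp k p.1 p.2) T := by
    refine (gExp_continuousOn k).mono ?_
    rintro ⟨b, d⟩ ⟨h1, h2, h3⟩
    simp only [Set.mem_setOf_eq]
    have hk0 : (0:ℝ) < k := by positivity
    have : 0 < 1/(k:ℝ) := by positivity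
    linarith
  obtain ⟨p₀, hp₀T, hmax⟩ := hcompact.exists_isMaxOn hTne hcont
  obtain ⟨hp1, hp2, hp3⟩ := hp₀T
  have hneg : gExp k p₀.1 p₀.2 < 0 := by
    have h1 : gExp k p₀.1 p₀.2 ≤ gExp k β p₀.2 := gExp_mono k hk hp1 hp2 hp3 hβk
    have h2 : gExp k β p₀.2 ≤ GExp k β :=
      le_csSup (GExp_bddAbove k hβ1) ⟨p₀.2, ⟨hp1, by linarith⟩, rfl⟩
    linarith
  refine ⟨-(gExp k p₀.1 p₀.2), by linarith, fun b d h1 h2 h3 => ?_⟩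
  have := hmax (show ((b,d) : ℝ×ℝ) ∈ T from ⟨h1, h2, h3⟩)
  simpa using this

theorem GExp_zero_neg (k : ℕ) (hk : 2 ≤ k) : GExp k 0 < 0 := by
  have h1 : GExp k 0 = gExp k 0 0 := by
    rw [GExp, show (0:ℝ)/2 = 0 from by norm_num, Set.Icc_self, Set.image_singleton,
      csSup_singleton]
  have h2 : gExp k 0 0 = - Real.logb 2 (k:ℝ) := by
    rw [gExp]
    simp [binEntropy_zero']
  rw [h1, h2, neg_lt, neg_zero]
  exact Real.logb_pos one_lt_two (by exact_mod_cast hk.trans_lt' one_lt_two)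

theorem card_univ_pairs (k n : ℕ) :
    (Finset.univ : Finset ((Fin n → Fin k) × (Fin n → Fin k))).card = k^(2*n) := by
  rw [Finset.card_univ, Fintype.card_prod, Fintype.card_fun, Fintype.card_fin,
    Fintype.card_fin, ← pow_add]
  congr 1
  omega

theorem avg_ge (k n m : ℕ) (hk0 : 0 < k) :
    (1 - ((badF k n m).card : ℝ)/((k:ℝ)^(2*n))) * ((m:ℝ)+1) ≤ avgEditDist k n := by
  have hkpow : (0:ℝ) < (k:ℝ)^(2*n) := by positivity
  have hbadle : (badF k n m).card ≤ k^(2*n) := by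
    rw [← card_univ_pairs k n]
    exact Finset.card_le_card (Finset.subset_univ _)
  have hsum : ((k:ℝ)^(2*n) - ((badF k n m).card : ℝ)) * ((m:ℝ)+1)
      ≤ ∑ p : (Fin n → Fin k) × (Fin n → Fin k),
          (editDist (List.ofFn p.1) (List.ofFn p.2) : ℝ) := by
    have hstep1 : ∀ p ∈ Finset.univ \ badF k n m,
        ((m:ℝ)+1) ≤ (editDist (List.ofFn p.1) (List.ofFn p.2) : ℝ) := by
      intro p hp
      rw [Finset.mem_sdiff] at hp
      have := hp.2
      simp only [badF, Finset.mem_filter, Finset.mem_univ, true_and, not_le] at this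
      have : m + 1 ≤ editDist (List.ofFn p.1) (List.ofFn p.2) := this
      exact_mod_cast this
    have hstep2 : ((Finset.univ \ badF k n m).card : ℝ) * ((m:ℝ)+1)
        ≤ ∑ p ∈ Finset.univ \ badF k n m,
            (editDist (List.ofFn p.1) (List.ofFn p.2) : ℝ) := by
      calc ((Finset.univ \ badF k n m).card : ℝ) * ((m:ℝ)+1)
          = ∑ _p ∈ Finset.univ \ badF k n m, ((m:ℝ)+1) := by
            rw [Finset.sum_const, nsmul_eq_mul]
        _ ≤ _ := Finset.sum_le_sum hstep1
    have hstep3 : ∑ p ∈ Finset.univ \ badF k n m,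
        (editDist (List.ofFn p.1) (List.ofFn p.2) : ℝ)
        ≤ ∑ p : (Fin n → Fin k) × (Fin n → Fin k),
            (editDist (List.ofFn p.1) (List.ofFn p.2) : ℝ) :=
      Finset.sum_le_sum_of_subset_of_nonneg (Finset.sdiff_subset)
        (fun p _ _ => by positivity)
    have hcard : ((Finset.univ \ badF k n m).card : ℝ)
        = (k:ℝ)^(2*n) - ((badF k n m).card : ℝ) := by
      rw [Finset.card_sdiff_of_subset (Finset.subset_univ _), card_univ_pairs k n]
      rw [Nat.cast_sub hbadle]
      push_cast
      ring
    calc ((k:ℝ)^(2*n) - ((badF k n m).card : ℝ)) * ((m:ℝ)+1)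
        = ((Finset.univ \ badF k n m).card : ℝ) * ((m:ℝ)+1) := by rw [hcard]
      _ ≤ _ := hstep2.trans hstep3
  have hflat : ∑ x : Fin n → Fin k, ∑ y : Fin n → Fin k,
      (editDist (List.ofFn x) (List.ofFn y) : ℝ)
      = ∑ p : (Fin n → Fin k) × (Fin n → Fin k),
          (editDist (List.ofFn p.1) (List.ofFn p.2) : ℝ) := by
    rw [← Finset.sum_product', Finset.univ_product_univ]
  rw [avgEditDist, hflat]
  rw [show (1 - ((badF k n m).card : ℝ)/((k:ℝ)^(2*n))) * ((m:ℝ)+1)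
      = ((k:ℝ)^(2*n))⁻¹ * (((k:ℝ)^(2*n) - ((badF k n m).card : ℝ)) * ((m:ℝ)+1)) from by
    field_simp]
  exact mul_le_mul_of_nonneg_left hsum (by positivity)

end EditProof

open Filter EditProof in
/-- If `G_k(β) < 0` for `β ∈ [0,1]`, then `α_k ≥ β`; consequently
`α_k ≥ sup { β ∈ [0,1] : G_k(β) < 0 }`. -/
theorem alpha_lower_bound_from_G (k : ℕ) (hk : 2 ≤ k) (α : ℝ)
    (hconv : Tendsto (fun n => alphaN k n) atTop (nhds α)) :
    (∀ β ∈ Set.Icc (0 : ℝ) 1, GExp k β < 0 → β ≤ α) ∧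
    sSup {β : ℝ | β ∈ Set.Icc (0 : ℝ) 1 ∧ GExp k β < 0} ≤ α := by
  have hk0 : 0 < k := by omega
  have hkR : (0:ℝ) < k := by positivity
  have part1 : ∀ β ∈ Set.Icc (0 : ℝ) 1, GExp k β < 0 → β ≤ α := by
    rintro β ⟨hβ0, hβ1⟩ hG
    obtain ⟨ε, hε, hT⟩ := exists_eps k hk hβ0 hβ1 hG
    set r : ℝ := (2:ℝ) ^ (-ε) with hr
    have hr0 : 0 ≤ r := (Real.rpow_pos_of_pos two_pos _).le
    have hr1 : r < 1 := Real.rpow_lt_one_of_one_lt_of_neg one_lt_two (by linarith)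
    set P : ℕ → ℝ := fun n => ((badF k n (Nat.floor (β*(n:ℝ)))).card : ℝ)/((k:ℝ)^(2*n))
      with hP
    have hP0 : ∀ n, 0 ≤ P n := fun n => by positivity
    have hP1 : ∀ n, P n ≤ 1 := by
      intro n
      rw [hP]
      have hb : ((badF k n (Nat.floor (β*(n:ℝ)))).card : ℝ) ≤ (k:ℝ)^(2*n) := by
        have h1 : (badF k n (Nat.floor (β*(n:ℝ)))).card ≤ k^(2*n) := by
          rw [← card_univ_pairs k n]
          exact Finset.card_le_card (Finset.subset_univ _)
        exact_mod_cast h1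
      rw [div_le_one (by positivity)]
      exact hb
    have hPle : ∀ n : ℕ, 1 ≤ n → P n ≤ 4 * ((n:ℝ)^2 * r^n) := by
      intro n hn1
      have hn0 : 0 < n := hn1
      have hnR : (0:ℝ) < n := by exact_mod_cast hn0
      set m := Nat.floor (β*(n:ℝ)) with hm
      have hβn0 : 0 ≤ β*(n:ℝ) := by positivity
      have hmle : (m:ℝ) ≤ β*(n:ℝ) := Nat.floor_le hβn0
      have hmn : m ≤ n := by
        have h1 : β*(n:ℝ) ≤ (n:ℝ) := by nlinarith
        have h2 := Nat.floor_le_floor h1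
        rwa [Nat.floor_natCast] at h2
      have hTnat : ∀ D S : ℕ, D ≤ n → S ≤ n - D → 2*D+S ≤ m →
          gExp k ((2*(D:ℝ)+(S:ℝ))/(n:ℝ)) ((D:ℝ)/(n:ℝ)) ≤ -ε := by
        intro D S hD hS hDS
        refine hT _ _ (by positivity) ?_ ?_
        · rw [show 2*((D:ℝ)/(n:ℝ)) = (2*(D:ℝ))/(n:ℝ) from by ring]
          gcongr
          linarith [Nat.cast_nonneg (α := ℝ) S]
        · rw [div_le_iff₀ hnR]
          calc 2*(D:ℝ)+(S:ℝ) ≤ (m:ℝ) := by exact_mod_cast hDS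
            _ ≤ β*(n:ℝ) := hmle
      have hbound := badF_card_le_real k n m hk hn0 hmn ε hTnat
      have h2 : P n ≤ ((m:ℝ)+1)^2 * (2:ℝ)^(-(ε*(n:ℝ))) := by
        rw [hP]
        rw [div_le_iff₀ (by positivity : (0:ℝ) < (k:ℝ)^(2*n))]
        calc ((badF k n m).card : ℝ)
            ≤ ((m:ℝ)+1)^2 * ((k:ℝ)^(2*n) * (2:ℝ)^(-(ε*(n:ℝ)))) := hbound
          _ = ((m:ℝ)+1)^2 * (2:ℝ)^(-(ε*(n:ℝ))) * (k:ℝ)^(2*n) := by ring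
      have h3 : ((m:ℝ)+1)^2 ≤ 4*(n:ℝ)^2 := by
        have hmnR : (m:ℝ) ≤ (n:ℝ) := by exact_mod_cast hmn
        have hn1R : (1:ℝ) ≤ (n:ℝ) := by exact_mod_cast hn1
        nlinarith
      have h4 : (2:ℝ)^(-(ε*(n:ℝ))) = r^n := by
        rw [hr, ← Real.rpow_natCast ((2:ℝ)^(-ε)) n, ← Real.rpow_mul (by norm_num : (0:ℝ) ≤ 2)]
        congr 1
        ring
      calc P n ≤ ((m:ℝ)+1)^2 * (2:ℝ)^(-(ε*(n:ℝ))) := h2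
        _ ≤ 4*(n:ℝ)^2 * (2:ℝ)^(-(ε*(n:ℝ))) :=
            mul_le_mul_of_nonneg_right h3 (Real.rpow_pos_of_pos two_pos _).le
        _ = 4*((n:ℝ)^2 * r^n) := by rw [h4]; ring
    have hPtend : Tendsto P atTop (nhds 0) := by
      have hgeo : Tendsto (fun n : ℕ => 4*((n:ℝ)^2 * r^n)) atTop (nhds 0) := by
        have := (tendsto_pow_const_mul_const_pow_of_lt_one 2 hr0 hr1).const_mul (4:ℝ)
        simpa using this
      refine squeeze_zero' (Filter.Eventually.of_forall hP0) ?_ hgeo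
      exact Filter.eventually_atTop.2 ⟨1, hPle⟩
    have hlow : ∀ n : ℕ, 1 ≤ n → β * (1 - P n) ≤ alphaN k n := by
      intro n hn1
      have hnR : (0:ℝ) < n := by exact_mod_cast hn1
      set m := Nat.floor (β*(n:ℝ)) with hm
      have havg := avg_ge k n m hk0
      have hβn : β*(n:ℝ) < (m:ℝ)+1 := Nat.lt_floor_add_one _
      have h1P : 0 ≤ 1 - P n := by linarith [hP1 n]
      rw [alphaN, le_div_iff₀ hnR]
      calc β * (1 - P n) * n = (β*(n:ℝ)) * (1 - P n) := by ring
        _ ≤ ((m:ℝ)+1) * (1 - P n) := mul_le_mul_of_nonneg_right hβn.le h1P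
        _ = (1 - ((badF k n m).card : ℝ)/((k:ℝ)^(2*n))) * ((m:ℝ)+1) := by
            rw [hP]; ring
        _ ≤ avgEditDist k n := havg
    have htends : Tendsto (fun n => β * (1 - P n)) atTop (nhds β) := by
      have h1 : Tendsto (fun n => 1 - P n) atTop (nhds 1) := by
        simpa using (tendsto_const_nhds.sub hPtend)
      simpa using (tendsto_const_nhds.mul h1)
    exact le_of_tendsto_of_tendsto htends hconv (Filter.eventually_atTop.2 ⟨1, hlow⟩)
  have hα0 : 0 ≤ α := part1 0 ⟨le_rfl, zero_le_one⟩ (GExp_zero_neg k hk)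
  exact ⟨part1, Real.sSup_le (fun b hb => part1 b hb.1 hb.2) hα0⟩
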